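/- Let F be a field, n ≥ 1, and let x_1,…,x_n, y_1,…,y_n be elements of F such that 1 − x_i y_j ≠ 0 for all i, j. Then the Cauchy determinant identity holds: det(1/(1 − x_i y_j))_{1≤i,j≤n} = ∏_{1≤i<j≤n} (x_i − x_j) · ∏_{1≤i<j≤n} (y_i − y_j) / ∏_{i=1}^n ∏_{j=1}^n (1 − x_i y_j). -/

import Mathlib

open Finset Matrix

set_option maxHeartbeats 1000000

private theorem cauchy_aux {F : Type*} [Field F] : ∀ (n : ℕ) (x y : Fin n → F),
    (∀ i j, 1 - x i * y j ≠ 0) →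
    (Matrix.of fun i j : Fin n => (1 - x i * y j)⁻¹).det *
      (∏ i : Fin n, ∏ j : Fin n, (1 - x i * y j))
    = (∏ i : Fin n, ∏ j ∈ Finset.Ioi i, (x i - x j)) *
      (∏ i : Fin n, ∏ j ∈ Finset.Ioi i, (y i - y j)) := by
  intro n
  induction n with
  | zero => intro x y _; simp
  | succ n ih =>
    intro x y h
    -- matrices appearing in the row/column reduction
    set A : Matrix (Fin (n+1)) (Fin (n+1)) F :=
      Matrix.of fun i j => (1 - x i * y j)⁻¹ with hA
    set C : Matrix (Fin (n+1)) (Fin (n+1)) F :=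
      Matrix.of (fun i j => if i = 0 then (1:F) else y j * (1 - x i * y j)⁻¹) with hC
    set E : Matrix (Fin (n+1)) (Fin (n+1)) F :=
      Matrix.of (fun i j => if i = 0 then (if j = 0 then (1:F) else 0)
        else (if j = 0 then y 0 else (1 - x i * y j)⁻¹)) with hE
    set r : Fin (n+1) → F := fun i => if i = 0 then 1 else x i - x 0 with hr
    set s : Fin (n+1) → F := fun j => (1 - x 0 * y j)⁻¹ with hs
    set u : Fin (n+1) → F := fun j => if j = 0 then 1 else y j - y 0 with hu
    set t : Fin (n+1) → F := fun i => if i = 0 then 1 else (1 - x i * y 0)⁻¹ with ht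
    -- Step 1: subtract row 0 from the other rows and factor
    have step1 : A.det = (∏ i, r i) * ((∏ j, s j) * C.det) := by
      have h1 : A.det =
          (Matrix.of fun i j => r i * (Matrix.of (fun i j => s j * C i j)) i j).det := by
        apply Matrix.det_eq_of_forall_row_eq_smul_add_const
          (fun i => if i = 0 then 0 else 1) 0 (by simp)
        intro i j
        by_cases hi : i = 0
        · subst hi; simp [hA, hr, hs, hC]
        · simp only [hA, hr, hs, hC, Matrix.of_apply, if_neg hi, if_pos rfl, ↓reduceIte]
          have a0 := h i j
          have b0 := h 0 j
          have b0' : 1 - y j * x 0 ≠ 0 := by rwa [mul_comm]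
          field_simp
          ring
      rw [h1, Matrix.det_mul_column, Matrix.det_mul_row]
    -- Step 2: subtract column 0 from the other columns and factor
    have step2 : C.det = (∏ j, u j) * ((∏ i, t i) * E.det) := by
      have h1 : C.det =
          (Matrix.of fun i j => u j * (Matrix.of (fun i j => t i * E i j)) i j).det := by
        rw [← Matrix.det_transpose C,
          ← Matrix.det_transpose (Matrix.of fun i j => u j * (Matrix.of (fun i j => t i * E i j)) i j)]
        apply Matrix.det_eq_of_forall_row_eq_smul_add_const
          (fun j => if j = 0 then 0 else 1) 0 (by simp)
        intro j i
        simp only [Matrix.transpose_apply, Matrix.of_apply]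
        by_cases hj : j = 0
        · subst hj
          by_cases hi : i = 0 <;>
            simp [hC, hu, ht, hE, hi, mul_comm]
        · by_cases hi : i = 0
          · subst hi; simp [hC, hu, ht, hE, hj]
          · simp only [hC, hu, ht, hE, Matrix.of_apply, if_neg hi, if_neg hj, if_pos rfl, ↓reduceIte]
            have a0 := h i j
            have b0 := h i 0
            have a0' : 1 - y j * x i ≠ 0 := by rwa [mul_comm]
            have b0' : 1 - y 0 * x i ≠ 0 := by rwa [mul_comm]
            field_simp
            ring
      rw [h1, Matrix.det_mul_row, Matrix.det_mul_column]
    -- Step 3: expand along the first row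
    have step3 : E.det =
        (Matrix.of fun i j : Fin n => (1 - x i.succ * y j.succ)⁻¹).det := by
      rw [Matrix.det_succ_row_zero]
      rw [Finset.sum_eq_single (0 : Fin (n+1))]
      · have : E 0 0 = 1 := by simp [hE]
        rw [this]
        simp only [Fin.val_zero, pow_zero, one_smul, one_mul, Fin.succAbove_zero]
        have hsub : E.submatrix Fin.succ Fin.succ
            = Matrix.of fun i j : Fin n => (1 - x i.succ * y j.succ)⁻¹ := by
          ext i j
          simp [hE, Fin.succ_ne_zero]
        rw [hsub]
      · intro b _ hb
        have : E 0 b = 0 := by simp [hE, hb]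
        rw [this]; simp
      · intro habs; exact absurd (Finset.mem_univ _) habs
    rw [step1, step2, step3]
    -- compute the four scalar products
    have hrprod : (∏ i, r i) = ∏ i : Fin n, (x i.succ - x 0) := by
      rw [Fin.prod_univ_succ]
      simp [hr, Fin.succ_ne_zero]
    have huprod : (∏ j, u j) = ∏ j : Fin n, (y j.succ - y 0) := by
      rw [Fin.prod_univ_succ]
      simp [hu, Fin.succ_ne_zero]
    have htprod : (∏ i, t i) = ∏ i : Fin n, (1 - x i.succ * y 0)⁻¹ := by
      rw [Fin.prod_univ_succ]
      simp [ht, Fin.succ_ne_zero]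
    -- split the big denominator product
    have hD : (∏ i : Fin (n+1), ∏ j : Fin (n+1), (1 - x i * y j))
        = (∏ j : Fin (n+1), (1 - x 0 * y j)) *
          ((∏ i : Fin n, (1 - x i.succ * y 0)) *
          ∏ i : Fin n, ∏ j : Fin n, (1 - x i.succ * y j.succ)) := by
      rw [Fin.prod_univ_succ]
      congr 1
      rw [← Finset.prod_mul_distrib]
      exact Finset.prod_congr rfl fun i _ => by rw [Fin.prod_univ_succ]
    rw [hrprod, huprod, htprod, hD]
    have hscancel : (∏ j : Fin (n+1), s j) * (∏ j : Fin (n+1), (1 - x 0 * y j)) = 1 := by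
      rw [← Finset.prod_mul_distrib]
      rw [Finset.prod_eq_one]
      intro j _
      exact inv_mul_cancel₀ (h 0 j)
    have htcancel : (∏ i : Fin n, (1 - x i.succ * y 0)⁻¹) *
        (∏ i : Fin n, (1 - x i.succ * y 0)) = 1 := by
      rw [← Finset.prod_mul_distrib]
      rw [Finset.prod_eq_one]
      intro i _
      exact inv_mul_cancel₀ (h i.succ 0)
    -- use the induction hypothesis
    have hIH := ih (fun i => x i.succ) (fun j => y j.succ) (fun i j => h i.succ j.succ)
    -- split the RHS products
    have hPx : (∏ i : Fin (n+1), ∏ j ∈ Finset.Ioi i, (x i - x j))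
        = (∏ j : Fin n, (x 0 - x j.succ)) *
          ∏ i : Fin n, ∏ j ∈ Finset.Ioi i, (x i.succ - x j.succ) := by
      rw [Fin.prod_univ_succ]
      congr 1
      · rw [Fin.prod_Ioi_zero]
      · exact Finset.prod_congr rfl fun i _ => Fin.prod_Ioi_succ _ i
    have hPy : (∏ i : Fin (n+1), ∏ j ∈ Finset.Ioi i, (y i - y j))
        = (∏ j : Fin n, (y 0 - y j.succ)) *
          ∏ i : Fin n, ∏ j ∈ Finset.Ioi i, (y i.succ - y j.succ) := by
      rw [Fin.prod_univ_succ]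
      congr 1
      · rw [Fin.prod_Ioi_zero]
      · exact Finset.prod_congr rfl fun i _ => Fin.prod_Ioi_succ _ i
    rw [hPx, hPy]
    -- sign bookkeeping
    have hsign : (∏ i : Fin n, (x i.succ - x 0)) * (∏ i : Fin n, (y i.succ - y 0))
        = (∏ i : Fin n, (x 0 - x i.succ)) * (∏ i : Fin n, (y 0 - y i.succ)) := by
      rw [← Finset.prod_mul_distrib, ← Finset.prod_mul_distrib]
      exact Finset.prod_congr rfl fun i _ => by ring
    -- final algebra
    calc (∏ i : Fin n, (x i.succ - x 0)) *
          ((∏ j : Fin (n+1), s j) *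
            ((∏ j : Fin n, (y j.succ - y 0)) *
              ((∏ i : Fin n, (1 - x i.succ * y 0)⁻¹) *
                (Matrix.of fun i j : Fin n => (1 - x i.succ * y j.succ)⁻¹).det))) *
          ((∏ j : Fin (n+1), (1 - x 0 * y j)) *
            ((∏ i : Fin n, (1 - x i.succ * y 0)) *
              ∏ i : Fin n, ∏ j : Fin n, (1 - x i.succ * y j.succ)))
        = ((∏ j : Fin (n+1), s j) * (∏ j : Fin (n+1), (1 - x 0 * y j))) *
          (((∏ i : Fin n, (1 - x i.succ * y 0)⁻¹) * (∏ i : Fin n, (1 - x i.succ * y 0))) *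
          (((∏ i : Fin n, (x i.succ - x 0)) * (∏ i : Fin n, (y i.succ - y 0))) *
            ((Matrix.of fun i j : Fin n => (1 - x i.succ * y j.succ)⁻¹).det *
              ∏ i : Fin n, ∏ j : Fin n, (1 - x i.succ * y j.succ)))) := by ring
      _ = ((∏ j : Fin n, (x 0 - x j.succ)) *
            ∏ i : Fin n, ∏ j ∈ Finset.Ioi i, (x i.succ - x j.succ)) *
          ((∏ j : Fin n, (y 0 - y j.succ)) *
            ∏ i : Fin n, ∏ j ∈ Finset.Ioi i, (y i.succ - y j.succ)) := by
        rw [hscancel, htcancel, hsign, hIH]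
        ring

/-- Cauchy determinant: For a field `F`, `n ≥ 1`, and
`x_1,…,x_n, y_1,…,y_n ∈ F` with `1 - x_i y_j ≠ 0` for all `i, j`,
`det(1/(1 - x_i y_j)) = ∏_{i<j}(x_i - x_j) ∏_{i<j}(y_i - y_j) / ∏_{i,j}(1 - x_i y_j)`. -/
theorem cauchy_determinant {F : Type*} [Field F] (n : ℕ) (hn : 1 ≤ n)
    (x y : Fin n → F) (h : ∀ i j, 1 - x i * y j ≠ 0) :
    (Matrix.of fun i j : Fin n => (1 - x i * y j)⁻¹).det
    = (∏ i : Fin n, ∏ j ∈ Finset.Ioi i, (x i - x j)) *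
      (∏ i : Fin n, ∏ j ∈ Finset.Ioi i, (y i - y j)) /
      ∏ i : Fin n, ∏ j : Fin n, (1 - x i * y j) := by
  have hD : (∏ i : Fin n, ∏ j : Fin n, (1 - x i * y j)) ≠ 0 :=
    Finset.prod_ne_zero_iff.mpr fun i _ =>
      Finset.prod_ne_zero_iff.mpr fun j _ => h i j
  rw [eq_div_iff hD]
  exact cauchy_aux n x y h
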